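/- If C ⊆ Φ⁺ contains all three simple roots (Δ ⊆ C) and has the property that C ∩ Φ' is closed in Φ'⁺ for every rank-2 parabolic subsystem Φ', then C = Φ⁺. Equivalently, the parabolic 2-closure of Δ is Φ⁺. -/

import Mathlib

open scoped NNReal

noncomputable section

/-- The ambient vector space `V = ℝ³`. -/
abbrev V : Type := Fin 3 → ℝ

/-- The symmetric bilinear form with `⟨αᵢ,αⱼ⟩ = 1` if `i = j` and `-1` otherwise. -/
def B (x y : V) : ℝ := 2 * (∑ i, x i * y i) - (∑ i, x i) * (∑ i, y i)

/-- The associated quadratic form. -/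
def Q (x : V) : ℝ := B x x

/-- The simple roots `α₁, α₂, α₃` (the standard basis vectors). -/
def α (i : Fin 3) : V := Pi.single i 1

/-- The set of simple roots. -/
def Δ : Set V := Set.range α

/-- `f` is the reflection `r_{αᵢ} : x ↦ x - 2⟨αᵢ,x⟩αᵢ` for some `i` (note `⟨αᵢ,αᵢ⟩ = 1`). -/
def IsSimpleReflection (f : V ≃ₗ[ℝ] V) : Prop :=
  ∃ i : Fin 3, ∀ x : V, f x = x - (2 * B (α i) x) • α i

/-- The group `W ≤ GL(V)` generated by the three simple reflections:
the standard reflection representation of `U₃`. -/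
def W : Subgroup (V ≃ₗ[ℝ] V) := Subgroup.closure {f | IsSimpleReflection f}

/-- The root system `Φ = {w·αᵢ : w ∈ W, i ∈ {1,2,3}}`. -/
def Φ : Set V := {x | ∃ w ∈ W, ∃ i : Fin 3, x = w (α i)}

/-- `Span_{≥0}(X)`: the set of nonnegative linear combinations of elements of `X`. -/
def nnspan (X : Set V) : Set V := (Submodule.span ℝ≥0 X : Set V)

/-- The positive roots `Φ⁺ = Φ ∩ Span_{≥0}(Δ)`. -/
def Φpos : Set V := Φ ∩ nnspan Δ

/-- `R ⊆ Φ⁺` is closed if for all `a, b ∈ R`, `Span_{≥0}{a,b} ∩ Φ⁺ ⊆ R`. -/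
def IsClosedSet (R : Set V) : Prop := ∀ a ∈ R, ∀ b ∈ R, nnspan {a, b} ∩ Φpos ⊆ R

/-- `R` is a biclosed subset of `Φ⁺`. -/
def IsBiclosed (R : Set V) : Prop := R ⊆ Φpos ∧ IsClosedSet R ∧ IsClosedSet (Φpos \ R)

/-- A rank-2 parabolic subsystem `w·(Span{αᵢ,αⱼ} ∩ Φ)`. -/
def IsRank2Parabolic (P : Set V) : Prop :=
  ∃ w ∈ W, ∃ i j : Fin 3, i ≠ j ∧
    P = (fun x => w x) '' ((Submodule.span ℝ {α i, α j} : Set V) ∩ Φ)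

/-- `R'` is closed in the set of positive roots `Φ'pos` of a subsystem. -/
def IsClosedIn (Φ'pos R' : Set V) : Prop := ∀ a ∈ R', ∀ b ∈ R', nnspan {a, b} ∩ Φ'pos ⊆ R'

/-- `R'` is biclosed in the set of positive roots `Φ'pos` of a subsystem. -/
def IsBiclosedIn (Φ'pos R' : Set V) : Prop :=
  R' ⊆ Φ'pos ∧ IsClosedIn Φ'pos R' ∧ IsClosedIn Φ'pos (Φ'pos \ R')

/-- `R ⊆ Φ⁺` is parabolic biclosed if its intersection with every rank-2 parabolic
subsystem `Φ'` is biclosed in `Φ'⁺`. -/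
def IsParabolicBiclosed (R : Set V) : Prop :=
  R ⊆ Φpos ∧ ∀ P, IsRank2Parabolic P → IsBiclosedIn (P ∩ Φpos) (R ∩ P)

def ht (x : V) : ℝ := x 0 + x 1 + x 2

def ZLat : Set V := {x | ∀ k : Fin 3, ∃ m : ℤ, x k = m}

-- height

lemma B_expand (x y : V) : B x y = 2*(x 0*y 0 + x 1*y 1 + x 2*y 2) - (x 0+x 1+x 2)*(y 0+y 1+y 2) := by
  simp [B, Fin.sum_univ_three]

lemma B_comm (x y : V) : B x y = B y x := by simp [B_expand]; ring_nf

lemma Bα (i : Fin 3) (x : V) : B (α i) x = 2 * x i - ht x := by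
  fin_cases i <;> simp [B_expand, α, Pi.single_apply, ht] <;> ring

lemma Bαα (i j : Fin 3) : B (α i) (α j) = if i = j then 1 else -1 := by
  fin_cases i <;> fin_cases j <;> simp [B_expand, α, Pi.single_apply] <;> norm_num

lemma Q_eq (x : V) : Q x = x 0 * B (α 0) x + x 1 * B (α 1) x + x 2 * B (α 2) x := by
  rw [Bα, Bα, Bα]; simp only [Q, B_expand, ht]; ring

lemma B_sub_right (x y z : V) : B x (y - z) = B x y - B x z := by
  simp [B_expand]; ring
lemma B_add_right (x y z : V) : B x (y + z) = B x y + B x z := by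
  simp [B_expand]; ring
lemma B_smul_right (r : ℝ) (x y : V) : B x (r • y) = r * B x y := by
  simp [B_expand]; ring

lemma ht_add (x y : V) : ht (x + y) = ht x + ht y := by simp [ht]; ring
lemma ht_sub (x y : V) : ht (x - y) = ht x - ht y := by simp [ht]; ring
lemma ht_smul (r : ℝ) (x : V) : ht (r • x) = r * ht x := by simp [ht]; ring
lemma ht_α (i : Fin 3) : ht (α i) = 1 := by fin_cases i <;> simp [ht, α, Pi.single_apply]

-- the reflection as a linear map
def reflmap (i : Fin 3) : V →ₗ[ℝ] V where
  toFun x := x - (2 * B (α i) x) • α i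
  map_add' x y := by simp [B, Fin.sum_univ_three]; module
  map_smul' c x := by simp [B, Fin.sum_univ_three]; module

lemma reflmap_invol (i : Fin 3) : Function.Involutive (reflmap i) := by
  intro x
  show (x - (2 * B (α i) x) • α i) - (2 * B (α i) (x - (2 * B (α i) x) • α i)) • α i = x
  rw [B_sub_right, B_smul_right, Bαα]
  simp only [if_pos rfl, if_true, mul_one]
  module

def sref (i : Fin 3) : V ≃ₗ[ℝ] V := LinearEquiv.ofInvolutive (reflmap i) (reflmap_invol i)

lemma sref_apply (i : Fin 3) (x : V) : sref i x = x - (2 * B (α i) x) • α i := rfl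

lemma sref_mem_W (i : Fin 3) : sref i ∈ W :=
  Subgroup.subset_closure ⟨i, fun x => rfl⟩

lemma sref_invol (i : Fin 3) (x : V) : sref i (sref i x) = x := reflmap_invol i x

-- W preserves B
lemma W_B {w : V ≃ₗ[ℝ] V} (hw : w ∈ W) : ∀ x y : V, B (w x) (w y) = B x y := by
  refine Subgroup.closure_induction (p := fun w _ => ∀ x y : V, B (w x) (w y) = B x y)
    ?_ ?_ ?_ ?_ hw
  · rintro f ⟨i, hf⟩ x y
    rw [hf x, hf y]
    rw [B_sub_right, B_smul_right]
    rw [B_comm (x - (2 * B (α i) x) • α i) y, B_sub_right, B_smul_right]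
    rw [B_comm (x - (2 * B (α i) x) • α i) (α i), B_sub_right, B_smul_right, Bαα]
    simp only [if_pos rfl, if_true]
    rw [B_comm y x, B_comm y (α i)]
    ring
  · intro x y; rfl
  · intro u v _ _ hu hv x y
    exact (hu (v x) (v y)).trans (hv x y)
  · intro u _ hu x y
    have := hu (u⁻¹ x) (u⁻¹ y)
    rw [show u (u⁻¹ x) = x from u.apply_symm_apply x,
         show u (u⁻¹ y) = y from u.apply_symm_apply y] at this
    exact this.symm

-- integer lattice

lemma α_apply (i k : Fin 3) : α i k = if k = i then 1 else 0 := Pi.single_apply i 1 k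

lemma α_lat (i : Fin 3) : α i ∈ ZLat := by
  intro k
  by_cases h : k = i
  · exact ⟨1, by simp [α, Pi.single_apply, h]⟩
  · exact ⟨0, by simp [α, Pi.single_apply, h]⟩

lemma ht_int {x : V} (hx : x ∈ ZLat) : ∃ m : ℤ, ht x = m := by
  obtain ⟨a, ha⟩ := hx 0; obtain ⟨b, hb⟩ := hx 1; obtain ⟨c, hc⟩ := hx 2
  exact ⟨a + b + c, by simp [ht, ha, hb, hc]⟩

lemma Bα_int {x : V} (hx : x ∈ ZLat) (i : Fin 3) : ∃ m : ℤ, B (α i) x = m := by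
  obtain ⟨a, ha⟩ := hx i
  obtain ⟨m, hm⟩ := ht_int hx
  exact ⟨2*a - m, by rw [Bα, ha, hm]; push_cast; ring⟩

lemma sref_lat {x : V} (hx : x ∈ ZLat) (i : Fin 3) : sref i x ∈ ZLat := by
  intro k
  obtain ⟨a, ha⟩ := hx k
  obtain ⟨m, hm⟩ := Bα_int hx i
  by_cases h : k = i
  · refine ⟨a - 2*m, ?_⟩
    rw [sref_apply]
    subst h
    simp only [Pi.sub_apply, Pi.smul_apply, smul_eq_mul, α_apply, if_pos rfl, mul_one, ha, hm]
    push_cast; ring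
  · refine ⟨a, ?_⟩
    rw [sref_apply]
    simp only [Pi.sub_apply, Pi.smul_apply, smul_eq_mul, α_apply, if_neg h, mul_zero, sub_zero, ha]

lemma W_lat {w : V ≃ₗ[ℝ] V} (hw : w ∈ W) : ∀ x : V, x ∈ ZLat ↔ w x ∈ ZLat := by
  refine Subgroup.closure_induction (p := fun w _ => ∀ x : V, x ∈ ZLat ↔ w x ∈ ZLat)
    ?_ ?_ ?_ ?_ hw
  · rintro f ⟨i, hf⟩ x
    have hfs : f x = sref i x := by rw [hf x, sref_apply]
    constructor
    · intro hx; rw [hfs]; exact sref_lat hx i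
    · intro hx
      have : sref i (sref i x) ∈ ZLat := by
        rw [sref_invol]
        rw [hfs] at hx
        have := sref_lat hx i
        rwa [sref_invol] at this
      rwa [sref_invol] at this
  · intro x; rfl
  · intro u v _ _ hu hv x
    exact (hv x).trans (hu (v x))
  · intro u _ hu x
    have := (hu (u⁻¹ x)).symm
    rwa [show u (u⁻¹ x) = x from u.apply_symm_apply x] at this

lemma Φ_lat {x : V} (hx : x ∈ Φ) : x ∈ ZLat := by
  obtain ⟨w, hw, i, rfl⟩ := hx
  exact (W_lat hw (α i)).mp (α_lat i)

lemma Φ_Q {x : V} (hx : x ∈ Φ) : Q x = 1 := by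
  obtain ⟨w, hw, i, rfl⟩ := hx
  show B _ _ = 1
  rw [W_B hw]
  have := Bαα i i
  simp at this
  exact this

lemma Φ_inv {w : V ≃ₗ[ℝ] V} (hw : w ∈ W) {x : V} (hx : x ∈ Φ) : w x ∈ Φ := by
  obtain ⟨u, hu, i, rfl⟩ := hx
  exact ⟨w * u, mul_mem hw hu, i, rfl⟩

lemma α_mem_Φ (i : Fin 3) : α i ∈ Φ := ⟨1, one_mem W, i, rfl⟩

lemma key_int (a b c : ℤ) (h : 2*(a^2+b^2+c^2) - (a+b+c)^2 = 1) (ha : 0 < a) (hb : b < 0) : False := by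
  rcases le_or_gt 0 c with hc | hc
  · nlinarith [sq_nonneg (a - c), sq_nonneg (a+c-b)]
  · nlinarith [sq_nonneg (a+c-b)]

lemma key3 (a b c : ℤ) (h : 2*(a^2+b^2+c^2) - (a+b+c)^2 = 1) :
    (0 ≤ a ∧ 0 ≤ b ∧ 0 ≤ c) ∨ (a ≤ 0 ∧ b ≤ 0 ∧ c ≤ 0) := by
  have P : ∀ u v w : ℤ, 2*(u^2+v^2+w^2) - (u+v+w)^2 = 1 → 0 ≤ u → v < 0 → u = 0 := by
    intro u v w hh hu hv
    rcases hu.eq_or_lt with h0 | h0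
    · exact h0.symm
    · exact (key_int u v w hh h0 hv).elim
  rcases le_or_gt 0 a with ha | ha <;> rcases le_or_gt 0 b with hb | hb <;>
    rcases le_or_gt 0 c with hc | hc
  · left; exact ⟨ha, hb, hc⟩
  · have h1 : a = 0 := P a c b (by linear_combination h) ha hc
    have h2 : b = 0 := P b c a (by linear_combination h) hb hc
    right; omega
  · have h1 : a = 0 := P a b c h ha hb
    have h2 : c = 0 := P c b a (by linear_combination h) hc hb
    right; omega
  · have h1 : a = 0 := P a b c h ha hb
    right; omega
  · have h1 : b = 0 := P b a c (by linear_combination h) hb ha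
    have h2 : c = 0 := P c a b (by linear_combination h) hc ha
    right; omega
  · have h1 : b = 0 := P b a c (by linear_combination h) hb ha
    right; omega
  · have h1 : c = 0 := P c a b (by linear_combination h) hc ha
    right; omega
  · right; exact ⟨ha.le, hb.le, hc.le⟩

lemma dichotomy {x : V} (hlat : x ∈ ZLat) (hQ : Q x = 1) :
    (∀ k, 0 ≤ x k) ∨ (∀ k, x k ≤ 0) := by
  obtain ⟨a, ha⟩ := hlat 0; obtain ⟨b, hb⟩ := hlat 1; obtain ⟨c, hc⟩ := hlat 2
  have hxx : B x x = 1 := hQ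
  rw [B_expand, ha, hb, hc] at hxx
  have hQ' : 2*(a^2+b^2+c^2) - (a+b+c)^2 = 1 := by
    have : ((2*(a^2+b^2+c^2) - (a+b+c)^2 : ℤ) : ℝ) = ((1:ℤ) : ℝ) := by
      push_cast; linear_combination hxx
    exact_mod_cast this
  rcases key3 a b c hQ' with ⟨h1, h2, h3⟩ | ⟨h1, h2, h3⟩
  · left; intro k; fin_cases k
    · show (0:ℝ) ≤ x 0; rw [ha]; exact_mod_cast h1
    · show (0:ℝ) ≤ x 1; rw [hb]; exact_mod_cast h2
    · show (0:ℝ) ≤ x 2; rw [hc]; exact_mod_cast h3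
  · right; intro k; fin_cases k
    · show x 0 ≤ (0:ℝ); rw [ha]; exact_mod_cast h1
    · show x 1 ≤ (0:ℝ); rw [hb]; exact_mod_cast h2
    · show x 2 ≤ (0:ℝ); rw [hc]; exact_mod_cast h3

lemma mem_nnspan_Δ {x : V} : x ∈ nnspan Δ ↔ ∀ k, 0 ≤ x k := by
  constructor
  · intro hx
    refine Submodule.span_induction (p := fun y _ => ∀ k, 0 ≤ y k) ?_ ?_ ?_ ?_ hx
    · rintro y ⟨i, rfl⟩ k
      rw [α_apply]; split <;> norm_num
    · intro k; simp
    · intro y z _ _ hy hz k; exact add_nonneg (hy k) (hz k)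
    · intro c y _ hy k
      have : (c • y) k = (c:ℝ) * y k := rfl
      rw [this]
      exact mul_nonneg c.2 (hy k)
  · intro hx
    have hrep : x = (⟨x 0, hx 0⟩ : ℝ≥0) • α 0 + (⟨x 1, hx 1⟩ : ℝ≥0) • α 1
        + (⟨x 2, hx 2⟩ : ℝ≥0) • α 2 := by
      funext k
      have h0 : ((⟨x 0, hx 0⟩ : ℝ≥0) • α 0) k = x 0 * α 0 k := rfl
      have h1 : ((⟨x 1, hx 1⟩ : ℝ≥0) • α 1) k = x 1 * α 1 k := rfl
      have h2 : ((⟨x 2, hx 2⟩ : ℝ≥0) • α 2) k = x 2 * α 2 k := rfl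
      show x k = _
      rw [Pi.add_apply, Pi.add_apply, h0, h1, h2]
      fin_cases k <;> simp [α_apply]
    rw [hrep]
    refine Submodule.add_mem _ (Submodule.add_mem _ ?_ ?_) ?_ <;>
      exact Submodule.smul_mem _ _ (Submodule.subset_span ⟨_, rfl⟩)

lemma α_pos (i : Fin 3) : α i ∈ Φpos := by
  refine ⟨α_mem_Φ i, mem_nnspan_Δ.mpr ?_⟩
  intro k; rw [α_apply]; split <;> norm_num

lemma pos_coords {x : V} (hx : x ∈ Φpos) : ∀ k, 0 ≤ x k := mem_nnspan_Δ.mp hx.2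

lemma ht_ge_one {x : V} (hx : x ∈ Φpos) : 1 ≤ ht x := by
  obtain ⟨m, hm⟩ := ht_int (Φ_lat hx.1)
  have h0 : 0 ≤ ht x := by
    have := pos_coords hx
    have h := this 0; have h1 := this 1; have h2 := this 2
    simp only [ht]; linarith
  have hne : ht x ≠ 0 := by
    intro h
    have hc := pos_coords hx
    have hc0 : x 0 = 0 := by have := hc 0; have := hc 1; have := hc 2; simp only [ht] at h; linarith
    have hc1 : x 1 = 0 := by have := hc 0; have := hc 1; have := hc 2; simp only [ht] at h; linarith
    have hc2 : x 2 = 0 := by have := hc 0; have := hc 1; have := hc 2; simp only [ht] at h; linarith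
    have hQ : Q x = 1 := Φ_Q hx.1
    rw [show x = 0 by funext k; fin_cases k <;> assumption] at hQ
    have : Q (0 : V) = 0 := by simp [Q, B_expand]
    rw [this] at hQ; norm_num at hQ
  have : (0:ℝ) < m := by rw [← hm]; exact lt_of_le_of_ne h0 (Ne.symm hne)
  have : (1:ℤ) ≤ m := by exact_mod_cast this
  rw [hm]; exact_mod_cast this

-- positivity of reflected root
lemma sref_pos {x : V} (hx : x ∈ Φpos) {i : Fin 3} (hne : x ≠ α i) : sref i x ∈ Φpos := by
  have hΦ : sref i x ∈ Φ := Φ_inv (sref_mem_W i) hx.1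
  refine ⟨hΦ, mem_nnspan_Δ.mpr ?_⟩
  rcases dichotomy (Φ_lat hΦ) (Φ_Q hΦ) with h | h
  · exact h
  · -- all coords of sref i x ≤ 0; derive x = α i, contradiction
    exfalso
    have hcoord : ∀ k, k ≠ i → x k = 0 := by
      intro k hk
      have h1 : (sref i x) k = x k := by
        rw [sref_apply]
        show x k - (2 * B (α i) x) * α i k = x k
        rw [α_apply, if_neg hk]; ring
      have := h k
      rw [h1] at this
      exact le_antisymm this (pos_coords hx k)
    have hxi : x = x i • α i := by
      funext k
      show x k = x i * α i k
      rw [α_apply]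
      by_cases hk : k = i
      · subst hk; simp
      · rw [if_neg hk, hcoord k hk]; ring
    have hQ : Q x = 1 := Φ_Q hx.1
    rw [hxi] at hQ
    have hQ2 : x i * x i = 1 := by
      have hb : B (x i • α i) (x i • α i) = x i * (x i * B (α i) (α i)) := by
        rw [B_smul_right, B_comm, B_smul_right, B_comm]
      have hαα : B (α i) (α i) = 1 := by rw [Bαα]; simp
      rw [Q, hb, hαα] at hQ
      nlinarith [hQ]
    have hxi1 : x i = 1 := by
      have hge : 0 ≤ x i := pos_coords hx i
      nlinarith [hQ2, hge]
    apply hne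
    rw [hxi, hxi1, one_smul]

lemma mul_apply' (u v : V ≃ₗ[ℝ] V) (x : V) : (u * v) x = u (v x) := rfl
lemma one_apply' (x : V) : (1 : V ≃ₗ[ℝ] V) x = x := rfl

-- dihedral roots
lemma dih_root : ∀ (n : ℕ) (i j : Fin 3), i ≠ j → ((n:ℝ)+1) • α i + (n:ℝ) • α j ∈ Φ := by
  intro n
  induction n with
  | zero =>
    intro i j _
    have : ((0:ℕ):ℝ)+1 = (1:ℝ) := by norm_num
    rw [show (((0:ℕ):ℝ)+1) • α i + ((0:ℕ):ℝ) • α j = α i by rw [this]; module]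
    exact α_mem_Φ i
  | succ n ih =>
    intro i j hij
    have h := ih j i (Ne.symm hij)
    have h2 : sref i (((n:ℝ)+1) • α j + (n:ℝ) • α i) = ((n:ℝ)+2) • α i + ((n:ℝ)+1) • α j := by
      rw [sref_apply]
      have hB : B (α i) (((n:ℝ)+1) • α j + (n:ℝ) • α i) = -1 := by
        rw [B_add_right, B_smul_right, B_smul_right, Bαα, Bαα, if_neg hij, if_pos rfl]
        ring
      rw [hB]
      module
    have h3 := Φ_inv (sref_mem_W i) h
    rw [h2] at h3
    rw [show ((((n+1:ℕ)):ℝ)+1) • α i + (((n+1:ℕ)):ℝ) • α j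
        = ((n:ℝ)+2) • α i + ((n:ℝ)+1) • α j by push_cast; module]
    exact h3

lemma claimE : ∀ (n : ℕ) (β : V), β ∈ Φpos → ht β ≤ (n:ℝ) → β ∉ Δ →
    ∃ w ∈ W, ∃ a b : Fin 3, a ≠ b ∧ ∃ m : ℕ, 1 ≤ m ∧
      β = w (((m:ℝ)+1) • α a + (m:ℝ) • α b) ∧ w (α a) ∈ Φpos ∧ w (α b) ∈ Φpos := by
  intro n
  induction n using Nat.strong_induction_on with
  | _ n ih =>
  intro β hβ hht hβΔ
  -- find i with B (α i) β > 0
  have hQ : Q β = 1 := Φ_Q hβ.1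
  have hpos := pos_coords hβ
  have hex : ∃ i : Fin 3, 0 < B (α i) β := by
    by_contra hcon
    push_neg at hcon
    have h0 := mul_nonpos_of_nonneg_of_nonpos (hpos 0) (hcon 0)
    have h1 := mul_nonpos_of_nonneg_of_nonpos (hpos 1) (hcon 1)
    have h2 := mul_nonpos_of_nonneg_of_nonpos (hpos 2) (hcon 2)
    rw [Q_eq] at hQ
    linarith
  obtain ⟨i, hci⟩ := hex
  set c := B (α i) β with hc
  -- c is a positive integer
  have hc1 : 1 ≤ c := by
    obtain ⟨m, hm⟩ := Bα_int (Φ_lat hβ.1) i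
    rw [← hc] at hm
    have : 0 < m := by exact_mod_cast hm ▸ hci
    have : (1:ℤ) ≤ m := this
    rw [hm]; exact_mod_cast this
  -- γ = sref i β
  set γ := sref i β with hγdef
  have hγeq : γ = β - (2*c) • α i := by rw [hγdef, sref_apply, hc]
  have hβγ : β = γ + (2*c) • α i := by rw [hγeq]; module
  have hγΦ : γ ∈ Φ := Φ_inv (sref_mem_W i) hβ.1
  have hβαi : β ≠ α i := by
    intro h; exact hβΔ ⟨i, h.symm⟩
  have hγpos : γ ∈ Φpos := sref_pos hβ hβαi
  have hBγ : B (α i) γ = -c := by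
    rw [hγeq, B_sub_right, B_smul_right, ← hc]
    have : B (α i) (α i) = 1 := by rw [Bαα]; simp
    rw [this]; ring
  have hhtγ : ht γ = ht β - 2*c := by
    rw [hγeq, ht_sub, ht_smul, ht_α]; ring
  by_cases hγΔ : γ ∈ Δ
  · -- γ = α j, c = 1, answer w = 1
    obtain ⟨j, hj⟩ := hγΔ
    have hij : i ≠ j := by
      intro h
      subst h
      rw [← hj, Bαα, if_pos rfl] at hBγ
      linarith
    have hcval : c = 1 := by
      rw [← hj, Bαα, if_neg hij] at hBγ
      linarith
    refine ⟨1, one_mem W, i, j, hij, 1, le_refl 1, ?_, ?_, ?_⟩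
    · rw [one_apply', hβγ, ← hj, hcval]
      push_cast
      module
    · rw [one_apply']; exact α_pos i
    · rw [one_apply']; exact α_pos j
  · -- inductive case
    have hhtγ1 : 1 ≤ ht γ := ht_ge_one hγpos
    have hn3 : 3 ≤ n := by
      have h1 : ht γ ≤ (n:ℝ) - 2 := by rw [hhtγ]; linarith
      have : (3:ℝ) ≤ (n:ℝ) := by linarith
      exact_mod_cast this
    have hlt : n - 2 < n := by omega
    have hγht : ht γ ≤ ((n-2 : ℕ) : ℝ) := by
      have : ((n-2:ℕ):ℝ) = (n:ℝ) - 2 := by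
        have : (2:ℕ) ≤ n := by omega
        push_cast [Nat.cast_sub this]
        ring
      rw [this, hhtγ]
      linarith
    obtain ⟨w, hw, a, b, hab, m, hm, hγw, hwa, hwb⟩ := ih (n-2) hlt γ hγpos hγht hγΔ
    set δ₁ := w (α a) with hδ₁
    set δ₂ := w (α b) with hδ₂
    have hγδ : γ = ((m:ℝ)+1) • δ₁ + (m:ℝ) • δ₂ := by
      rw [hγw, map_add, map_smul, map_smul]
    have hBδδ : B δ₁ δ₂ = -1 := by
      rw [hδ₁, hδ₂, W_B hw, Bαα, if_neg hab]
    have hBexp : B (α i) γ = ((m:ℝ)+1) * B (α i) δ₁ + (m:ℝ) * B (α i) δ₂ := by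
      rw [hγδ, B_add_right, B_smul_right, B_smul_right]
    by_cases hd2 : δ₂ = α i
    · -- c = 1 case, shift m
      have hBd2 : B (α i) δ₂ = 1 := by rw [hd2, Bαα, if_pos rfl]
      have hBd1 : B (α i) δ₁ = -1 := by
        rw [← hd2, B_comm]; exact hBδδ
      have hcval : c = 1 := by
        rw [hBexp, hBd1, hBd2] at hBγ
        linarith
      refine ⟨w, hw, b, a, Ne.symm hab, m+1, by omega, ?_, hwb, hwa⟩
      rw [hβγ, hcval, ← hd2, hδ₂, ← map_smul, hγw, ← map_add]
      congr 1
      push_cast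
      module
    · by_cases hd1 : δ₁ = α i
      · -- impossible
        exfalso
        have hBd1 : B (α i) δ₁ = 1 := by rw [hd1, Bαα, if_pos rfl]
        have hBd2 : B (α i) δ₂ = -1 := by rw [← hd1]; exact hBδδ
        rw [hBexp, hBd1, hBd2] at hBγ
        linarith
      · -- main case: w' = sref i * w
        refine ⟨sref i * w, mul_mem (sref_mem_W i) hw, a, b, hab, m, hm, ?_, ?_, ?_⟩
        · rw [mul_apply', ← hγw]
          -- β = sref i γ
          rw [hγdef, sref_invol]
        · rw [mul_apply', ← hδ₁]
          exact sref_pos hwa hd1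
        · rw [mul_apply', ← hδ₂]
          exact sref_pos hwb hd2

lemma main_lemma (C : Set V) (hΔ : Δ ⊆ C)
    (hclosed : ∀ P : Set V, IsRank2Parabolic P → IsClosedIn (P ∩ Φpos) (C ∩ P)) :
    ∀ (n : ℕ) (β : V), β ∈ Φpos → ht β ≤ (n:ℝ) → β ∈ C := by
  intro n
  induction n using Nat.strong_induction_on with
  | _ n ih =>
  intro β hβ hht
  by_cases hβΔ : β ∈ Δ
  · exact hΔ hβΔ
  obtain ⟨w, hw, a, b, hab, m, hm, hβw, hwa, hwb⟩ := claimE n β hβ hht hβΔ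
  set δ₁ := w (α a) with hδ₁
  set δ₂ := w (α b) with hδ₂
  have hβδ : β = ((m:ℝ)+1) • δ₁ + (m:ℝ) • δ₂ := by
    rw [hβw, map_add, map_smul, map_smul]
  have hht1 : 1 ≤ ht δ₁ := ht_ge_one hwa
  have hht2 : 1 ≤ ht δ₂ := ht_ge_one hwb
  have hm1 : (1:ℝ) ≤ (m:ℝ) := by exact_mod_cast hm
  have hhtβ : ht β = ((m:ℝ)+1) * ht δ₁ + (m:ℝ) * ht δ₂ := by
    rw [hβδ, ht_add, ht_smul, ht_smul]
  -- δ's have height ≤ n - 2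
  have hn2 : (2:ℝ) ≤ (n:ℝ) := by
    have : (3:ℝ) ≤ ht β := by nlinarith
    linarith
  have hn2' : 2 ≤ n := by exact_mod_cast hn2
  have hcast : ((n-2:ℕ):ℝ) = (n:ℝ) - 2 := by
    push_cast [Nat.cast_sub hn2']
    ring
  have hd1ht : ht δ₁ ≤ ((n-2:ℕ):ℝ) := by rw [hcast]; nlinarith
  have hd2ht : ht δ₂ ≤ ((n-2:ℕ):ℝ) := by rw [hcast]; nlinarith
  have hd1C : δ₁ ∈ C := ih (n-2) (by omega) δ₁ hwa hd1ht
  have hd2C : δ₂ ∈ C := ih (n-2) (by omega) δ₂ hwb hd2ht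
  -- the parabolic
  set P : Set V := (fun x => w x) '' ((Submodule.span ℝ {α a, α b} : Set V) ∩ Φ) with hP
  have hparab : IsRank2Parabolic P := ⟨w, hw, a, b, hab, rfl⟩
  have hmem1 : δ₁ ∈ P :=
    ⟨α a, ⟨Submodule.subset_span (Set.mem_insert _ _), α_mem_Φ a⟩, rfl⟩
  have hmem2 : δ₂ ∈ P :=
    ⟨α b, ⟨Submodule.subset_span (Set.mem_insert_of_mem _ rfl), α_mem_Φ b⟩, rfl⟩
  have hβP : β ∈ P := by
    refine ⟨((m:ℝ)+1) • α a + (m:ℝ) • α b, ⟨?_, ?_⟩, hβw.symm⟩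
    · exact Submodule.add_mem _
        (Submodule.smul_mem _ _ (Submodule.subset_span (Set.mem_insert _ _)))
        (Submodule.smul_mem _ _ (Submodule.subset_span (Set.mem_insert_of_mem _ rfl)))
    · exact dih_root m a b hab
  have hβspan : β ∈ nnspan {δ₁, δ₂} := by
    have e1 : ((⟨(m:ℝ)+1, by positivity⟩ : ℝ≥0) • δ₁) = ((m:ℝ)+1) • δ₁ := rfl
    have e2 : ((⟨(m:ℝ), by positivity⟩ : ℝ≥0) • δ₂) = (m:ℝ) • δ₂ := rfl
    have : β = (⟨(m:ℝ)+1, by positivity⟩ : ℝ≥0) • δ₁ + (⟨(m:ℝ), by positivity⟩ : ℝ≥0) • δ₂ := by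
      rw [e1, e2]; exact hβδ
    rw [this]
    exact Submodule.add_mem _
      (Submodule.smul_mem _ _ (Submodule.subset_span (Set.mem_insert _ _)))
      (Submodule.smul_mem _ _ (Submodule.subset_span (Set.mem_insert_of_mem _ rfl)))
  have := hclosed P hparab δ₁ ⟨hd1C, hmem1⟩ δ₂ ⟨hd2C, hmem2⟩ ⟨hβspan, hβP, hβ⟩
  exact this.1

/-- If `C ⊆ Φ⁺` contains all three simple roots and `C ∩ Φ'` is closed in `Φ'⁺` for
every rank-2 parabolic subsystem `Φ'`, then `C = Φ⁺`: the parabolic 2-closure of `Δ`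
is all of `Φ⁺`. -/
theorem parabolic_closure_of_simples (C : Set V) (hC : C ⊆ Φpos) (hΔ : Δ ⊆ C)
    (hclosed : ∀ P : Set V, IsRank2Parabolic P → IsClosedIn (P ∩ Φpos) (C ∩ P)) :
    C = Φpos := by
  apply Set.Subset.antisymm hC
  intro β hβ
  obtain ⟨z, hz⟩ := ht_int (Φ_lat hβ.1)
  have h1 : 1 ≤ ht β := ht_ge_one hβ
  refine main_lemma C hΔ hclosed z.toNat β hβ ?_
  rw [hz]
  exact_mod_cast Int.self_le_toNat z
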